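/- Let 0 < ρ < 1 and 0 < ε < 1, and set δ = ρ·ε / (14 + 4/ε). If G and G′ are graphs on the same vertex set of size n, each with at least ρ·n²/2 edges, and their cut distance satisfies d_□(G, G′) ≤ δ, then |q*(G) − q*(G′)| ≤ ε. -/

import Mathlib

open Finset
open scoped Classical

/-- The number of edges of a finite graph. -/
noncomputable def edgeCount {V : Type} [Fintype V] [DecidableEq V] (G : SimpleGraph V) : ℕ :=
  G.edgeFinset.card

/-- vol(A): the sum over vertices of A of their degree in G. -/
noncomputable def degSum {V : Type} [Fintype V] [DecidableEq V] (G : SimpleGraph V)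
    (A : Finset V) : ℕ :=
  ∑ v ∈ A, G.degree v

/-- e(A): the number of edges of G with both endpoints in A. -/
noncomputable def intEdges {V : Type} [Fintype V] [DecidableEq V] (G : SimpleGraph V)
    (A : Finset V) : ℕ :=
  (G.edgeFinset.filter (fun e => ∀ v ∈ e, v ∈ A)).card

/-- The modularity score q_𝒜(G) of a vertex partition 𝒜 of G; it is 0 if G has no edges. -/
noncomputable def modScore {V : Type} [Fintype V] [DecidableEq V] (G : SimpleGraph V)
    (P : Finpartition (univ : Finset V)) : ℝ :=
  if edgeCount G = 0 then 0 else
    (∑ A ∈ P.parts, (intEdges G A : ℝ)) / (edgeCount G : ℝ)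
      - (∑ A ∈ P.parts, (degSum G A : ℝ) ^ 2) / (4 * (edgeCount G : ℝ) ^ 2)

/-- The modularity q*(G) of a graph: the maximum of q_𝒜(G) over all vertex partitions 𝒜. -/
noncomputable def modularity {V : Type} [Fintype V] [DecidableEq V] (G : SimpleGraph V) : ℝ :=
  ⨆ P : Finpartition (univ : Finset V), modScore G P

/-- The probability that the random subgraph G_p of G (each edge of G retained
independently with probability p) satisfies the predicate Q. -/
noncomputable def subgraphProb {V : Type} [Fintype V] [DecidableEq V] (G : SimpleGraph V)
    (p : ℝ) (Q : SimpleGraph V → Prop) : ℝ :=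
  ∑ F ∈ G.edgeFinset.powerset,
    if Q (SimpleGraph.fromEdgeSet (F : Set (Sym2 V))) then
      p ^ F.card * (1 - p) ^ (G.edgeFinset.card - F.card)
    else 0

/-- e_G(S, T): the number of ordered pairs (s, t) ∈ S × T with st an edge of G. -/
noncomputable def ePairs {V : Type} [Fintype V] [DecidableEq V] (G : SimpleGraph V)
    (S T : Finset V) : ℕ :=
  ((S ×ˢ T).filter (fun st => G.Adj st.1 st.2)).card

/-- The cut distance d_□(G, G′) = n⁻² · max_{S,T ⊆ V} |e_G(S,T) − e_{G′}(S,T)|. -/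
noncomputable def cutDist {V : Type} [Fintype V] [DecidableEq V]
    (G G' : SimpleGraph V) : ℝ :=
  (⨆ S : Finset V, ⨆ T : Finset V, |(ePairs G S T : ℝ) - (ePairs G' S T : ℝ)|) /
    (Fintype.card V : ℝ) ^ 2


lemma greedy {ι : Type} [Fintype ι] [DecidableEq ι] (k : ℕ) (hk : 0 < k) (w : ι → ℝ)
    (hw : ∀ i, 0 ≤ w i) (s : Finset ι) :
    ∃ f : ι → Fin k, ∑ j : Fin k, (∑ i ∈ s.filter (fun i => f i = j), w i) ^ 2
      ≤ ∑ i ∈ s, w i ^ 2 + (∑ i ∈ s, w i) ^ 2 / k := by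
  induction s using Finset.induction_on with
  | empty =>
      refine ⟨fun _ => ⟨0, hk⟩, ?_⟩
      simp
  | @insert i₀ s hi₀ ih =>
      obtain ⟨f, hf⟩ := ih
      obtain ⟨j₀, -, hmin⟩ := Finset.exists_min_image (univ : Finset (Fin k))
        (fun j => ∑ i ∈ s.filter (fun i => f i = j), w i) ⟨⟨0, hk⟩, mem_univ _⟩
      set vols : Fin k → ℝ := fun j => ∑ i ∈ s.filter (fun i => f i = j), w i with hvols
      have hvnn : ∀ j, 0 ≤ vols j := fun j => Finset.sum_nonneg fun i _ => hw i
      have hsumv : ∑ j : Fin k, vols j = ∑ i ∈ s, w i := Finset.sum_fiberwise s f w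
      have hminavg : (k : ℝ) * vols j₀ ≤ ∑ i ∈ s, w i := by
        calc (k : ℝ) * vols j₀ = ∑ _j : Fin k, vols j₀ := by
              simp [mul_comm]
          _ ≤ ∑ j : Fin k, vols j := Finset.sum_le_sum fun j _ => hmin j (mem_univ j)
          _ = _ := hsumv
      refine ⟨Function.update f i₀ j₀, ?_⟩
      have hfilter : ∀ j : Fin k,
          (insert i₀ s).filter (fun i => Function.update f i₀ j₀ i = j)
            = if j = j₀ then insert i₀ (s.filter (fun i => f i = j)) else s.filter (fun i => f i = j) := by
        intro j
        split_ifs with h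
        · subst h
          ext a
          simp only [mem_filter, mem_insert, Function.update]
          constructor
          · rintro ⟨ha | ha, hfa⟩
            · exact Or.inl ha
            · right; refine ⟨ha, ?_⟩
              simp only [dif_neg (fun h : a = i₀ => hi₀ (h ▸ ha))] at hfa
              exact hfa
          · rintro (rfl | ⟨ha, hfa⟩)
            · simp
            · refine ⟨Or.inr ha, ?_⟩
              simp [dif_neg (fun h : a = i₀ => hi₀ (h ▸ ha)), hfa]
        · ext a
          simp only [mem_filter, mem_insert, Function.update]
          constructor
          · rintro ⟨ha | ha, hfa⟩
            · exfalso; subst ha; simp at hfa; exact h hfa.symm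
            · refine ⟨ha, ?_⟩
              simpa [dif_neg (fun hh : a = i₀ => hi₀ (hh ▸ ha))] using hfa
          · rintro ⟨ha, hfa⟩
            exact ⟨Or.inr ha, by simpa [dif_neg (fun hh : a = i₀ => hi₀ (hh ▸ ha))] using hfa⟩
      have hsums : ∀ j : Fin k,
          (∑ i ∈ (insert i₀ s).filter (fun i => Function.update f i₀ j₀ i = j), w i)
            = vols j + (if j = j₀ then w i₀ else 0) := by
        intro j
        rw [hfilter j]
        split_ifs with h
        · subst h
          rw [Finset.sum_insert (by simp [hi₀])]
          ring
        · simp [hvols]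
      calc ∑ j : Fin k, (∑ i ∈ (insert i₀ s).filter (fun i => Function.update f i₀ j₀ i = j), w i) ^ 2
          = ∑ j : Fin k, ((vols j) ^ 2 + (if j = j₀ then 2 * vols j * w i₀ + w i₀ ^ 2 else 0)) := by
            refine Finset.sum_congr rfl fun j _ => ?_
            rw [hsums j]
            split_ifs <;> ring
        _ = (∑ j : Fin k, vols j ^ 2) + (2 * vols j₀ * w i₀ + w i₀ ^ 2) := by
            rw [Finset.sum_add_distrib, Finset.sum_ite_eq' univ j₀
              (fun j => 2 * vols j * w i₀ + w i₀ ^ 2), if_pos (mem_univ _)]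
        _ ≤ (∑ i ∈ s, w i ^ 2 + (∑ i ∈ s, w i) ^ 2 / k) + (2 * vols j₀ * w i₀ + w i₀ ^ 2) := by
            linarith [hf]
        _ ≤ ∑ i ∈ insert i₀ s, w i ^ 2 + (∑ i ∈ insert i₀ s, w i) ^ 2 / k := by
            rw [Finset.sum_insert hi₀, Finset.sum_insert hi₀]
            have hk' : (0:ℝ) < k := by exact_mod_cast hk
            have h1 : 2 * vols j₀ * w i₀ ≤ 2 * w i₀ * (∑ i ∈ s, w i) / k := by
              rw [le_div_iff₀ hk']
              nlinarith [hw i₀, hvnn j₀, hminavg]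
            have h3 : (w i₀ + ∑ i ∈ s, w i) ^ 2 / k
                = w i₀ ^ 2 / k + 2 * w i₀ * (∑ i ∈ s, w i) / k + (∑ i ∈ s, w i) ^ 2 / k := by
              ring
            have h4 : 0 ≤ w i₀ ^ 2 / k := by positivity
            rw [h3]
            linarith
  

lemma edgediff (M M' S S' β k : ℝ) (hM : 0 < M) (hM' : 0 < M') (hS0 : 0 ≤ S)
    (hSM : S ≤ M) (hSS' : |S - S'| ≤ k * (β * M')) (hMM' : |M - M'| ≤ β * M')
    (hβ : 0 ≤ β) (hk : 0 ≤ k) : |S / M - S' / M'| ≤ (k + 1) * β := by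
  have key : S / M - S' / M' = (S - S') / M' + (S / M) * ((M' - M) / M') := by
    field_simp
    ring
  have h1 : |(S - S') / M'| ≤ k * β := by
    rw [abs_div, abs_of_pos hM', div_le_iff₀ hM']
    nlinarith [hSS']
  have h2 : |(S / M) * ((M' - M) / M')| ≤ β := by
    rw [abs_mul]
    have hxm : |S / M| ≤ 1 := by
      rw [abs_of_nonneg (by positivity), div_le_one hM]
      exact hSM
    have hmm : |(M' - M) / M'| ≤ β := by
      rw [abs_div, abs_of_pos hM', div_le_iff₀ hM']
      rw [abs_sub_comm] at hMM'
      nlinarith [hMM']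
    calc |S / M| * |(M' - M) / M'| ≤ 1 * β :=
          mul_le_mul hxm hmm (abs_nonneg _) zero_le_one
      _ = β := one_mul β
  calc |S / M - S' / M'| = |(S - S') / M' + (S / M) * ((M' - M) / M')| := by rw [key]
    _ ≤ |(S - S') / M'| + |(S / M) * ((M' - M) / M')| := abs_add_le _ _
    _ ≤ k * β + β := add_le_add h1 h2
    _ = (k + 1) * β := by ring

lemma taxdiff {ι : Type} (s : Finset ι) (x y : ι → ℝ) (β : ℝ) (hβ : 0 ≤ β)
    (hx0 : ∀ i ∈ s, 0 ≤ x i) (hy0 : ∀ i ∈ s, 0 ≤ y i)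
    (hy1 : ∀ i ∈ s, y i ≤ 1)
    (hsx : ∑ i ∈ s, x i ≤ 1) (hsy : ∑ i ∈ s, y i ≤ 1)
    (hx1 : ∀ i ∈ s, x i ≤ 1)
    (hd : ∀ i ∈ s, |x i - y i| ≤ β * (1 + x i)) :
    |∑ i ∈ s, x i ^ 2 - ∑ i ∈ s, y i ^ 2| ≤ 4 * β := by
  have key : ∀ i ∈ s, |x i ^ 2 - y i ^ 2| ≤ β * (x i + y i + x i ^ 2 + x i * y i) := by
    intro i hi
    have hfac : x i ^ 2 - y i ^ 2 = (x i - y i) * (x i + y i) := by ring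
    rw [hfac, abs_mul, abs_of_nonneg (add_nonneg (hx0 i hi) (hy0 i hi))]
    calc |x i - y i| * (x i + y i) ≤ (β * (1 + x i)) * (x i + y i) :=
          mul_le_mul_of_nonneg_right (hd i hi) (add_nonneg (hx0 i hi) (hy0 i hi))
      _ = β * (x i + y i + x i ^ 2 + x i * y i) := by ring
  have h1 : ∑ i ∈ s, x i ^ 2 ≤ ∑ i ∈ s, x i :=
    Finset.sum_le_sum fun i hi => by nlinarith [hx0 i hi, hx1 i hi]
  have h2 : ∑ i ∈ s, x i * y i ≤ ∑ i ∈ s, x i :=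
    Finset.sum_le_sum fun i hi => by nlinarith [hx0 i hi, hy1 i hi, hy0 i hi]
  calc |∑ i ∈ s, x i ^ 2 - ∑ i ∈ s, y i ^ 2| = |∑ i ∈ s, (x i ^ 2 - y i ^ 2)| := by
        rw [Finset.sum_sub_distrib]
    _ ≤ ∑ i ∈ s, |x i ^ 2 - y i ^ 2| := Finset.abs_sum_le_sum_abs _ _
    _ ≤ ∑ i ∈ s, β * (x i + y i + x i ^ 2 + x i * y i) := Finset.sum_le_sum key
    _ = β * (∑ i ∈ s, x i + ∑ i ∈ s, y i + ∑ i ∈ s, x i ^ 2 + ∑ i ∈ s, x i * y i) := by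
        rw [← Finset.mul_sum]
        congr 1
        rw [Finset.sum_add_distrib, Finset.sum_add_distrib, Finset.sum_add_distrib]
    _ ≤ β * 4 := by
        apply mul_le_mul_of_nonneg_left _ hβ
        linarith
    _ = 4 * β := mul_comm _ _
variable {V : Type} [Fintype V] [DecidableEq V] (G : SimpleGraph V)

lemma ePairs_univ (A : Finset V) : ePairs G A univ = degSum G A := by
  classical
  unfold ePairs degSum
  rw [Finset.card_filter, Finset.sum_product]
  refine Finset.sum_congr rfl fun a _ => ?_
  rw [← Finset.card_filter]
  rw [← SimpleGraph.neighborFinset_eq_filter, SimpleGraph.card_neighborFinset_eq_degree]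

lemma fiber_card_two (A : Finset V)
    (e : Sym2 V) (he : e ∈ G.edgeFinset.filter (fun e => ∀ v ∈ e, v ∈ A)) :
    (((A ×ˢ A).filter (fun st => G.Adj st.1 st.2)).filter (fun p => Sym2.mk p.1 p.2 = e)).card = 2 := by
  classical
  induction e using Sym2.ind with
  | _ a b =>
    simp only [Finset.mem_filter, SimpleGraph.mem_edgeFinset, SimpleGraph.mem_edgeSet] at he
    obtain ⟨hadj, hmem⟩ := he
    have ha : a ∈ A := hmem a (by simp)
    have hb : b ∈ A := hmem b (by simp)
    have hne : a ≠ b := hadj.ne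
    have : (((A ×ˢ A).filter (fun st => G.Adj st.1 st.2)).filter (fun p => Sym2.mk p.1 p.2 = s(a,b)))
        = {(a,b), (b,a)} := by
      ext ⟨x, y⟩
      simp only [Finset.mem_filter, Finset.mem_product, Finset.mem_insert, Finset.mem_singleton,
        Prod.mk.injEq, Sym2.eq_iff]
      constructor
      · rintro ⟨-, h | h⟩
        · exact Or.inl ⟨h.1, h.2⟩
        · exact Or.inr ⟨h.1, h.2⟩
      · rintro (⟨rfl, rfl⟩ | ⟨rfl, rfl⟩)
        · exact ⟨⟨⟨ha, hb⟩, hadj⟩, Or.inl ⟨rfl, rfl⟩⟩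
        · exact ⟨⟨⟨hb, ha⟩, hadj.symm⟩, Or.inr ⟨rfl, rfl⟩⟩
    rw [this]
    rw [Finset.card_insert_of_notMem (by simp [Prod.ext_iff]; exact fun h _ => hne h)]
    simp

lemma ePairs_self (A : Finset V) : ePairs G A A = 2 * intEdges G A := by
  classical
  unfold ePairs intEdges
  rw [Finset.card_eq_sum_card_fiberwise
    (f := fun p : V × V => Sym2.mk p.1 p.2) (t := G.edgeFinset.filter (fun e => ∀ v ∈ e, v ∈ A))
    (by
      rintro ⟨a, b⟩ hp
      simp only [Finset.mem_coe, Finset.mem_filter, Finset.mem_product] at hp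
      simp only [Finset.mem_coe, Finset.mem_filter, SimpleGraph.mem_edgeFinset]
      refine ⟨hp.2, ?_⟩
      intro v hv
      rw [Sym2.mem_iff] at hv
      rcases hv with rfl | rfl
      exacts [hp.1.1, hp.1.2])]
  rw [Finset.sum_congr rfl (fun e he => fiber_card_two G A e he), Finset.sum_const,
    smul_eq_mul, mul_comm]

lemma intEdges_univ : intEdges G univ = edgeCount G := by
  unfold intEdges edgeCount
  congr 1
  exact Finset.filter_true_of_mem (fun e _ => fun v _ => Finset.mem_univ v)

lemma ePairs_univ_univ : ePairs G univ univ = 2 * edgeCount G := by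
  rw [ePairs_self, intEdges_univ]

-- partition sum of a vertex function
lemma partition_sum (P : Finpartition (univ : Finset V)) (g : V → ℝ) :
    ∑ A ∈ P.parts, ∑ v ∈ A, g v = ∑ v : V, g v := by
  classical
  rw [← Finset.sum_biUnion]
  · congr 1
    rw [← Finset.sup_eq_biUnion]
    exact P.sup_parts
  · exact (Finset.supIndep_iff_pairwiseDisjoint.mp P.supIndep)

lemma degSum_parts (P : Finpartition (univ : Finset V)) :
    ∑ A ∈ P.parts, (degSum G A : ℝ) = 2 * edgeCount G := by
  unfold degSum
  push_cast
  rw [partition_sum P (fun v => (G.degree v : ℝ))]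
  rw [← Nat.cast_sum]
  rw [SimpleGraph.sum_degrees_eq_twice_card_edges]
  push_cast
  rfl

-- sum of intEdges over parts equals a single filter card
lemma intEdges_parts_eq (P : Finpartition (univ : Finset V)) :
    ∑ A ∈ P.parts, intEdges G A
      = (G.edgeFinset.filter (fun e => ∃ A ∈ P.parts, ∀ v ∈ e, v ∈ A)).card := by
  classical
  unfold intEdges
  rw [← Finset.card_biUnion]
  · congr 1
    ext e
    simp only [Finset.mem_biUnion, Finset.mem_filter]
    constructor
    · rintro ⟨A, hA, he, hsub⟩
      exact ⟨he, A, hA, hsub⟩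
    · rintro ⟨he, A, hA, hsub⟩
      exact ⟨A, hA, he, hsub⟩
  · intro A hA B hB hne
    rw [Function.onFun, Finset.disjoint_left]
    intro e heA heB
    simp only [Finset.mem_filter] at heA heB
    have hv : e.out.1 ∈ e := Sym2.out_fst_mem e
    exact Finset.disjoint_left.mp
      (P.disjoint hA hB hne) (heA.2 _ hv) (heB.2 _ hv)

lemma intEdges_parts_le (P : Finpartition (univ : Finset V)) :
    ∑ A ∈ P.parts, intEdges G A ≤ edgeCount G := by
  rw [intEdges_parts_eq]
  exact Finset.card_le_card (Finset.filter_subset _ _)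

lemma merge (P : Finpartition (univ : Finset V)) (k : ℕ) (hk : 0 < k) :
    ∃ Q : Finpartition (univ : Finset V), Q.parts.card ≤ k ∧
      (∑ A ∈ P.parts, (intEdges G A : ℝ)) ≤ ∑ B ∈ Q.parts, (intEdges G B : ℝ) ∧
      ∑ B ∈ Q.parts, (degSum G B : ℝ) ^ 2
        ≤ ∑ A ∈ P.parts, (degSum G A : ℝ) ^ 2 + (2 * (edgeCount G : ℝ)) ^ 2 / k := by
  classical
  obtain ⟨f, hf⟩ := greedy k hk (fun A : Finset V => (degSum G A : ℝ))
    (fun A => by positivity) P.parts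
  set h : V → Fin k := fun v => f (P.part v) with hh
  set Q : Finpartition (univ : Finset V) := Finpartition.ofSetoid (Setoid.ker h) with hQ
  have hparts : Q.parts = univ.image (fun a => univ.filter (fun b => h a = h b)) := by
    simp [hQ, Finpartition.ofSetoid, Finpartition.ofSetSetoid_parts, Setoid.ker, Function.onFun]
  set fib : Fin k → Finset V := fun j => univ.filter (fun b => h b = j) with hfibdef
  have hfib : ∀ a : V, univ.filter (fun b => h a = h b) = fib (h a) := by
    intro a
    apply Finset.filter_congr
    intro b _
    simp [eq_comm]
  have hparts2 : Q.parts = (univ.image h).image fib := by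
    rw [hparts, Finset.image_image]
    exact Finset.image_congr fun a _ => hfib a
  have hcard : Q.parts.card ≤ k := by
    rw [hparts2]
    calc ((univ.image h).image fib).card ≤ (univ.image h).card := Finset.card_image_le
      _ ≤ Fintype.card (Fin k) := Finset.card_le_univ _
      _ = k := Fintype.card_fin k
  have hconst : ∀ A ∈ P.parts, ∀ a ∈ A, h a = f A := by
    intro A hA a ha
    simp only [hh]
    rw [P.part_eq_of_mem hA ha]
  have hedge : ∑ A ∈ P.parts, intEdges G A ≤ ∑ B ∈ Q.parts, intEdges G B := by
    rw [intEdges_parts_eq, intEdges_parts_eq]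
    apply Finset.card_le_card
    intro e he
    simp only [Finset.mem_filter] at he ⊢
    obtain ⟨hee, A, hA, hsub⟩ := he
    refine ⟨hee, ?_⟩
    obtain ⟨a, ha⟩ := P.nonempty_of_mem_parts hA
    refine ⟨univ.filter (fun b => h a = h b), ?_, ?_⟩
    · rw [hparts]
      exact Finset.mem_image_of_mem _ (mem_univ a)
    · intro v hv
      simp only [Finset.mem_filter, Finset.mem_univ, true_and]
      rw [hconst A hA a ha, hconst A hA v (hsub v hv)]
  have hdegfib : ∀ j, (degSum G (fib j) : ℝ)
      = ∑ A ∈ P.parts.filter (fun A => f A = j), (degSum G A : ℝ) := by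
    intro j
    have h1 : (degSum G (fib j) : ℝ) = ∑ v : V, (if h v = j then (G.degree v : ℝ) else 0) := by
      unfold degSum
      push_cast
      rw [hfibdef, Finset.sum_filter]
    rw [h1, ← partition_sum P (fun v => if h v = j then (G.degree v : ℝ) else 0),
      Finset.sum_filter]
    refine Finset.sum_congr rfl fun A hA => ?_
    by_cases hfA : f A = j
    · rw [if_pos hfA]
      have : ∀ v ∈ A, (if h v = j then (G.degree v : ℝ) else 0) = (G.degree v : ℝ) := by
        intro v hv
        rw [if_pos (by rw [hconst A hA v hv, hfA])]
      rw [Finset.sum_congr rfl this]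
      unfold degSum
      push_cast
      rfl
    · rw [if_neg hfA]
      refine Finset.sum_eq_zero fun v hv => ?_
      rw [if_neg (by rw [hconst A hA v hv]; exact hfA)]
  have htax : ∑ B ∈ Q.parts, (degSum G B : ℝ) ^ 2
      ≤ ∑ A ∈ P.parts, (degSum G A : ℝ) ^ 2 + (2 * (edgeCount G : ℝ)) ^ 2 / k := by
    have e1 : ∑ B ∈ Q.parts, (degSum G B : ℝ) ^ 2
        = ∑ j ∈ univ.image h, (degSum G (fib j) : ℝ) ^ 2 := by
      rw [hparts2]
      refine Finset.sum_image ?_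
      intro j1 hj1 j2 hj2 hfe
      obtain ⟨a, -, ha⟩ := Finset.mem_image.mp hj1
      have h1 : a ∈ fib j1 := by simp [hfibdef, ha]
      rw [hfe] at h1
      simp only [hfibdef, Finset.mem_filter] at h1
      rw [← ha, h1.2]
    have e2 : ∑ j ∈ univ.image h, (degSum G (fib j) : ℝ) ^ 2
        ≤ ∑ j : Fin k, (degSum G (fib j) : ℝ) ^ 2 :=
      Finset.sum_le_sum_of_subset_of_nonneg (Finset.subset_univ _)
        (fun j _ _ => by positivity)
    have e3 : ∑ j : Fin k, (degSum G (fib j) : ℝ) ^ 2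
        = ∑ j : Fin k, (∑ A ∈ P.parts.filter (fun A => f A = j), (degSum G A : ℝ)) ^ 2 := by
      exact Finset.sum_congr rfl fun j _ => by rw [hdegfib j]
    have e4 := hf
    rw [degSum_parts] at e4
    calc ∑ B ∈ Q.parts, (degSum G B : ℝ) ^ 2
        = ∑ j ∈ univ.image h, (degSum G (fib j) : ℝ) ^ 2 := e1
      _ ≤ ∑ j : Fin k, (degSum G (fib j) : ℝ) ^ 2 := e2
      _ = ∑ j : Fin k, (∑ A ∈ P.parts.filter (fun A => f A = j), (degSum G A : ℝ)) ^ 2 := e3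
      _ ≤ ∑ A ∈ P.parts, (degSum G A : ℝ) ^ 2 + (2 * (edgeCount G : ℝ)) ^ 2 / k := e4
  exact ⟨Q, hcard, by exact_mod_cast hedge, htax⟩

lemma score_close (G G' : SimpleGraph V) (P : Finpartition (univ : Finset V)) (k : ℕ) (β : ℝ)
    (hβ : 0 ≤ β) (hM : 0 < (edgeCount G : ℝ)) (hM' : 0 < (edgeCount G' : ℝ))
    (hcard : P.parts.card ≤ k)
    (hed : ∀ A : Finset V, |(intEdges G A : ℝ) - (intEdges G' A : ℝ)| ≤ β * (edgeCount G' : ℝ))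
    (hvd : ∀ A : Finset V, |(degSum G A : ℝ) - (degSum G' A : ℝ)| ≤ 2 * β * (edgeCount G' : ℝ))
    (hmd : |(edgeCount G : ℝ) - (edgeCount G' : ℝ)| ≤ β * (edgeCount G' : ℝ)) :
    |modScore G P - modScore G' P| ≤ ((k : ℝ) + 5) * β := by
  classical
  set M : ℝ := (edgeCount G : ℝ) with hMdef
  set M' : ℝ := (edgeCount G' : ℝ) with hM'def
  have hm0 : edgeCount G ≠ 0 := by
    intro h0
    rw [hMdef, h0] at hM
    norm_num at hM
  have hm0' : edgeCount G' ≠ 0 := by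
    intro h0
    rw [hM'def, h0] at hM'
    norm_num at hM'
  rw [modScore, modScore, if_neg hm0, if_neg hm0']
  set S : ℝ := ∑ A ∈ P.parts, (intEdges G A : ℝ) with hSdef
  set S' : ℝ := ∑ A ∈ P.parts, (intEdges G' A : ℝ) with hS'def
  -- edge term
  have hS0 : 0 ≤ S := Finset.sum_nonneg fun A _ => Nat.cast_nonneg _
  have hE : |S / M - S' / M'| ≤ ((k : ℝ) + 1) * β := by
    apply edgediff M M' S S' β k hM hM' hS0
    · rw [hSdef, hMdef]
      have hcast : (∑ A ∈ P.parts, (intEdges G A : ℝ)) = ((∑ A ∈ P.parts, intEdges G A : ℕ) : ℝ) := by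
        push_cast; rfl
      rw [hcast]
      exact_mod_cast intEdges_parts_le G P
    · calc |S - S'| = |∑ A ∈ P.parts, ((intEdges G A : ℝ) - (intEdges G' A : ℝ))| := by
            rw [hSdef, hS'def, Finset.sum_sub_distrib]
        _ ≤ ∑ A ∈ P.parts, |(intEdges G A : ℝ) - (intEdges G' A : ℝ)| :=
            Finset.abs_sum_le_sum_abs _ _
        _ ≤ ∑ _A ∈ P.parts, β * M' := Finset.sum_le_sum fun A _ => hed A
        _ = (P.parts.card : ℝ) * (β * M') := by rw [Finset.sum_const, nsmul_eq_mul]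
        _ ≤ (k : ℝ) * (β * M') := by
            apply mul_le_mul_of_nonneg_right _ (mul_nonneg hβ (le_of_lt hM'))
            exact_mod_cast hcard
    · exact hmd
    · exact hβ
    · exact Nat.cast_nonneg k
  -- tax term
  set x : Finset V → ℝ := fun A => (degSum G A : ℝ) / (2 * M) with hxdef
  set y : Finset V → ℝ := fun A => (degSum G' A : ℝ) / (2 * M') with hydef
  have hsumx : ∑ A ∈ P.parts, x A = 1 := by
    rw [hxdef]
    rw [← Finset.sum_div, degSum_parts]
    field_simp
    rfl
  have hsumy : ∑ A ∈ P.parts, y A = 1 := by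
    rw [hydef]
    rw [← Finset.sum_div, degSum_parts]
    field_simp
    rfl
  have hx0 : ∀ A ∈ P.parts, 0 ≤ x A := fun A _ =>
    div_nonneg (Nat.cast_nonneg _) (by linarith)
  have hy0 : ∀ A ∈ P.parts, 0 ≤ y A := fun A _ =>
    div_nonneg (Nat.cast_nonneg _) (by linarith)
  have hx1 : ∀ A ∈ P.parts, x A ≤ 1 := by
    intro A hA
    rw [← hsumx]
    exact Finset.single_le_sum hx0 hA
  have hy1 : ∀ A ∈ P.parts, y A ≤ 1 := by
    intro A hA
    rw [← hsumy]
    exact Finset.single_le_sum hy0 hA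
  have hxy : ∀ A ∈ P.parts, |x A - y A| ≤ β * (1 + x A) := by
    intro A hA
    have hkey : x A - y A = ((degSum G A : ℝ) - (degSum G' A : ℝ)) / (2 * M')
        + x A * ((M' - M) / M') := by
      rw [hxdef, hydef]
      field_simp
      ring
    have hb1 : |((degSum G A : ℝ) - (degSum G' A : ℝ)) / (2 * M')| ≤ β := by
      rw [abs_div, abs_of_pos (by linarith : (0:ℝ) < 2 * M'),
        div_le_iff₀ (by linarith : (0:ℝ) < 2 * M')]
      calc |(degSum G A : ℝ) - (degSum G' A : ℝ)| ≤ 2 * β * M' := hvd A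
        _ = β * (2 * M') := by ring
    have hb2 : |x A * ((M' - M) / M')| ≤ β * x A := by
      rw [abs_mul, abs_of_nonneg (hx0 A hA), abs_div, abs_of_pos hM', abs_sub_comm]
      rw [mul_comm (β) (x A)]
      apply mul_le_mul_of_nonneg_left _ (hx0 A hA)
      rw [div_le_iff₀ hM']
      exact hmd
    calc |x A - y A| ≤ |((degSum G A : ℝ) - (degSum G' A : ℝ)) / (2 * M')|
          + |x A * ((M' - M) / M')| := by rw [hkey]; exact abs_add_le _ _
      _ ≤ β + β * x A := add_le_add hb1 hb2
      _ = β * (1 + x A) := by ring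
  have hT : |∑ A ∈ P.parts, x A ^ 2 - ∑ A ∈ P.parts, y A ^ 2| ≤ 4 * β :=
    taxdiff P.parts x y β hβ hx0 hy0 hy1 (le_of_eq hsumx) (le_of_eq hsumy) hx1 hxy
  have hTx : (∑ A ∈ P.parts, (degSum G A : ℝ) ^ 2) / (4 * M ^ 2) = ∑ A ∈ P.parts, x A ^ 2 := by
    rw [Finset.sum_div]
    refine Finset.sum_congr rfl fun A _ => ?_
    rw [hxdef, div_pow]
    congr 1
    ring
  have hTy : (∑ A ∈ P.parts, (degSum G' A : ℝ) ^ 2) / (4 * M' ^ 2) = ∑ A ∈ P.parts, y A ^ 2 := by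
    rw [Finset.sum_div]
    refine Finset.sum_congr rfl fun A _ => ?_
    rw [hydef, div_pow]
    congr 1
    ring
  rw [hTx, hTy]
  calc |S / M - (∑ A ∈ P.parts, x A ^ 2) - (S' / M' - ∑ A ∈ P.parts, y A ^ 2)|
      = |(S / M - S' / M') - ((∑ A ∈ P.parts, x A ^ 2) - (∑ A ∈ P.parts, y A ^ 2))| := by
        congr 1
        ring
    _ ≤ |S / M - S' / M'| + |(∑ A ∈ P.parts, x A ^ 2) - (∑ A ∈ P.parts, y A ^ 2)| :=
        abs_sub _ _
    _ ≤ ((k : ℝ) + 1) * β + 4 * β := add_le_add hE hT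
    _ = ((k : ℝ) + 5) * β := by ring


lemma oneside (G G' : SimpleGraph V) (ε β : ℝ) (k : ℕ) (hk : 0 < k)
    (hM : 0 < (edgeCount G : ℝ)) (hM' : 0 < (edgeCount G' : ℝ)) (hβ : 0 ≤ β)
    (hed : ∀ A : Finset V, |(intEdges G A : ℝ) - (intEdges G' A : ℝ)| ≤ β * (edgeCount G' : ℝ))
    (hvd : ∀ A : Finset V, |(degSum G A : ℝ) - (degSum G' A : ℝ)| ≤ 2 * β * (edgeCount G' : ℝ))
    (hmd : |(edgeCount G : ℝ) - (edgeCount G' : ℝ)| ≤ β * (edgeCount G' : ℝ))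
    (hnum : 1 / (k : ℝ) + ((k : ℝ) + 5) * β ≤ ε) :
    modularity G ≤ modularity G' + ε := by
  classical
  have hne : Nonempty (Finpartition (univ : Finset V)) := ⟨⊥⟩
  rw [modularity]
  apply ciSup_le
  intro P
  obtain ⟨Q, hcard, hedge, htax⟩ := merge G P k hk
  have hm0 : edgeCount G ≠ 0 := by
    intro h0
    rw [h0] at hM
    norm_num at hM
  have hkpos : (0 : ℝ) < (k : ℝ) := by exact_mod_cast hk
  have h1 : modScore G P ≤ modScore G Q + 1 / (k : ℝ) := by
    rw [modScore, modScore, if_neg hm0, if_neg hm0]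
    have hdivE : (∑ A ∈ P.parts, (intEdges G A : ℝ)) / (edgeCount G : ℝ)
        ≤ (∑ B ∈ Q.parts, (intEdges G B : ℝ)) / (edgeCount G : ℝ) := by
      gcongr
    have hkey : ((∑ A ∈ P.parts, (degSum G A : ℝ) ^ 2) + (2 * (edgeCount G : ℝ)) ^ 2 / k)
          / (4 * (edgeCount G : ℝ) ^ 2)
        = (∑ A ∈ P.parts, (degSum G A : ℝ) ^ 2) / (4 * (edgeCount G : ℝ) ^ 2) + 1 / k := by
      field_simp
      ring
    have hdivT : (∑ B ∈ Q.parts, (degSum G B : ℝ) ^ 2) / (4 * (edgeCount G : ℝ) ^ 2)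
        ≤ (∑ A ∈ P.parts, (degSum G A : ℝ) ^ 2) / (4 * (edgeCount G : ℝ) ^ 2) + 1 / k := by
      rw [← hkey]
      gcongr
    linarith
  have h2 := score_close G G' Q k β hβ hM hM' hcard hed hvd hmd
  have h3 : modScore G' Q ≤ modularity G' :=
    le_ciSup (Set.Finite.bddAbove (Set.finite_range _)) Q
  have h4 : modScore G Q - modScore G' Q ≤ ((k : ℝ) + 5) * β := (abs_sub_le_iff.mp h2).1
  linarith

set_option maxHeartbeats 2000000 in
/-- Modularity is continuous in cut distance for dense graphs: let 0 < ρ < 1,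
0 < ε < 1, and δ = ρ·ε / (14 + 4/ε). If G, G′ are graphs on the same n-element
vertex set, each with at least ρ·n²/2 edges, and d_□(G, G′) ≤ δ, then
|q*(G) − q*(G′)| ≤ ε. -/
theorem statement16 (ρ ε : ℝ) (hρ0 : 0 < ρ) (hρ1 : ρ < 1) (hε0 : 0 < ε) (hε1 : ε < 1)
    (V : Type) [Fintype V] [DecidableEq V] (G G' : SimpleGraph V)
    (hG : ρ * (Fintype.card V : ℝ) ^ 2 / 2 ≤ (edgeCount G : ℝ))
    (hG' : ρ * (Fintype.card V : ℝ) ^ 2 / 2 ≤ (edgeCount G' : ℝ))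
    (hdist : cutDist G G' ≤ ρ * ε / (14 + 4 / ε)) :
    |modularity G - modularity G'| ≤ ε := by
  classical
  by_cases hn : Fintype.card V = 0
  · have hVempty : IsEmpty V := Fintype.card_eq_zero_iff.mp hn
    have hGG : G = G' := by
      ext a b
      exact hVempty.elim a
    rw [hGG, sub_self, abs_zero]
    linarith
  · have hnpos : (0 : ℝ) < (Fintype.card V : ℝ) := by
      have := Nat.pos_of_ne_zero hn
      exact_mod_cast this
    have hden : (0 : ℝ) < 14 + 4 / ε := by positivity
    set β : ℝ := ε / (14 + 4 / ε) with hβdef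
    have hβ0 : 0 < β := by positivity
    have hM : 0 < (edgeCount G : ℝ) := lt_of_lt_of_le (by positivity) hG
    have hM' : 0 < (edgeCount G' : ℝ) := lt_of_lt_of_le (by positivity) hG'
    -- pairwise cut bound
    have hpair : ∀ S T : Finset V,
        |(ePairs G S T : ℝ) - (ePairs G' S T : ℝ)|
          ≤ ρ * ε / (14 + 4 / ε) * (Fintype.card V : ℝ) ^ 2 := by
      intro S T
      have h1 := hdist
      rw [cutDist, div_le_iff₀ (by positivity)] at h1
      refine le_trans ?_ h1
      have hbT : ∀ S : Finset V,
          BddAbove (Set.range fun T => |(ePairs G S T : ℝ) - (ePairs G' S T : ℝ)|) :=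
        fun S => Set.Finite.bddAbove (Set.finite_range _)
      calc |(ePairs G S T : ℝ) - (ePairs G' S T : ℝ)|
          ≤ ⨆ T : Finset V, |(ePairs G S T : ℝ) - (ePairs G' S T : ℝ)| := le_ciSup (hbT S) T
        _ ≤ ⨆ S : Finset V, ⨆ T : Finset V, |(ePairs G S T : ℝ) - (ePairs G' S T : ℝ)| :=
            le_ciSup (f := fun S => ⨆ T : Finset V, |(ePairs G S T : ℝ) - (ePairs G' S T : ℝ)|)
              (Set.Finite.bddAbove (Set.finite_range _)) S
    have hd2 : ρ * ε / (14 + 4 / ε) * (Fintype.card V : ℝ) ^ 2 ≤ β * (2 * (edgeCount G' : ℝ)) := by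
      have h1 : ρ * ε / (14 + 4 / ε) * (Fintype.card V : ℝ) ^ 2
          = β * (2 * (ρ * (Fintype.card V : ℝ) ^ 2 / 2)) := by
        rw [hβdef]
        field_simp
      rw [h1]
      have := hG'
      nlinarith [hβ0.le]
    have hd2' : ρ * ε / (14 + 4 / ε) * (Fintype.card V : ℝ) ^ 2 ≤ β * (2 * (edgeCount G : ℝ)) := by
      have h1 : ρ * ε / (14 + 4 / ε) * (Fintype.card V : ℝ) ^ 2
          = β * (2 * (ρ * (Fintype.card V : ℝ) ^ 2 / 2)) := by
        rw [hβdef]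
        field_simp
      rw [h1]
      have := hG
      nlinarith [hβ0.le]
    -- per-part bounds, both directions
    have hed : ∀ A : Finset V,
        |(intEdges G A : ℝ) - (intEdges G' A : ℝ)| ≤ β * (edgeCount G' : ℝ) := by
      intro A
      have h := hpair A A
      rw [ePairs_self, ePairs_self] at h
      push_cast at h
      have h2 : |2 * (intEdges G A : ℝ) - 2 * (intEdges G' A : ℝ)|
          = 2 * |(intEdges G A : ℝ) - (intEdges G' A : ℝ)| := by
        rw [show 2 * (intEdges G A : ℝ) - 2 * (intEdges G' A : ℝ)
          = 2 * ((intEdges G A : ℝ) - (intEdges G' A : ℝ)) by ring, abs_mul, abs_two]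
      rw [h2] at h
      have := le_trans h hd2
      linarith
    have hvd : ∀ A : Finset V,
        |(degSum G A : ℝ) - (degSum G' A : ℝ)| ≤ 2 * β * (edgeCount G' : ℝ) := by
      intro A
      have h := hpair A univ
      rw [ePairs_univ, ePairs_univ] at h
      have := le_trans h hd2
      linarith
    have hmd : |(edgeCount G : ℝ) - (edgeCount G' : ℝ)| ≤ β * (edgeCount G' : ℝ) := by
      have h := hpair univ univ
      rw [ePairs_univ_univ, ePairs_univ_univ] at h
      push_cast at h
      have h2 : |2 * (edgeCount G : ℝ) - 2 * (edgeCount G' : ℝ)|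
          = 2 * |(edgeCount G : ℝ) - (edgeCount G' : ℝ)| := by
        rw [show 2 * (edgeCount G : ℝ) - 2 * (edgeCount G' : ℝ)
          = 2 * ((edgeCount G : ℝ) - (edgeCount G' : ℝ)) by ring, abs_mul, abs_two]
      rw [h2] at h
      have := le_trans h hd2
      linarith
    have hed' : ∀ A : Finset V,
        |(intEdges G' A : ℝ) - (intEdges G A : ℝ)| ≤ β * (edgeCount G : ℝ) := by
      intro A
      have h := hpair A A
      rw [ePairs_self, ePairs_self] at h
      push_cast at h
      have h2 : |2 * (intEdges G A : ℝ) - 2 * (intEdges G' A : ℝ)|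
          = 2 * |(intEdges G' A : ℝ) - (intEdges G A : ℝ)| := by
        rw [abs_sub_comm, show 2 * (intEdges G' A : ℝ) - 2 * (intEdges G A : ℝ)
          = 2 * ((intEdges G' A : ℝ) - (intEdges G A : ℝ)) by ring, abs_mul, abs_two]
      rw [h2] at h
      have := le_trans h hd2'
      linarith
    have hvd' : ∀ A : Finset V,
        |(degSum G' A : ℝ) - (degSum G A : ℝ)| ≤ 2 * β * (edgeCount G : ℝ) := by
      intro A
      have h := hpair A univ
      rw [ePairs_univ, ePairs_univ] at h
      rw [abs_sub_comm] at h
      have := le_trans h hd2'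
      linarith
    have hmd' : |(edgeCount G' : ℝ) - (edgeCount G : ℝ)| ≤ β * (edgeCount G : ℝ) := by
      have h := hpair univ univ
      rw [ePairs_univ_univ, ePairs_univ_univ] at h
      push_cast at h
      have h2 : |2 * (edgeCount G : ℝ) - 2 * (edgeCount G' : ℝ)|
          = 2 * |(edgeCount G' : ℝ) - (edgeCount G : ℝ)| := by
        rw [abs_sub_comm, show 2 * (edgeCount G' : ℝ) - 2 * (edgeCount G : ℝ)
          = 2 * ((edgeCount G' : ℝ) - (edgeCount G : ℝ)) by ring, abs_mul, abs_two]
      rw [h2] at h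
      have := le_trans h hd2'
      linarith
    -- choose k
    set k : ℕ := ⌈2 / ε⌉₊ with hkdef
    have hk0 : 0 < k := Nat.ceil_pos.mpr (by positivity)
    have hkpos : (0 : ℝ) < (k : ℝ) := by exact_mod_cast hk0
    have hkub : (k : ℝ) < 2 / ε + 1 := Nat.ceil_lt_add_one (by positivity)
    have hklb : 2 / ε ≤ (k : ℝ) := Nat.le_ceil _
    have hε2 : ε * (2 / ε) = 2 := by field_simp
    have hε4 : ε * (4 / ε) = 4 := by field_simp
    have hnum : 1 / (k : ℝ) + ((k : ℝ) + 5) * β ≤ ε := by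
      have hhalf1 : 1 / (k : ℝ) ≤ ε / 2 := by
        rw [div_le_div_iff₀ hkpos two_pos]
        nlinarith [hklb, hε2]
      have hhalf2 : ((k : ℝ) + 5) * β ≤ ε / 2 := by
        rw [hβdef, ← mul_div_assoc, div_le_div_iff₀ hden two_pos]
        nlinarith [hkub, hε2, hε4, hε0.le]
      linarith
    have hone := oneside G G' ε β k hk0 hM hM' hβ0.le hed hvd hmd hnum
    have htwo := oneside G' G ε β k hk0 hM' hM hβ0.le hed' hvd' hmd' hnum
    rw [abs_sub_le_iff]
    constructor
    · linarith
    · linarith
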